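/- Let K be a field and V a set of discrete valuations of K such that for every nonzero a in K, the set of v in V with v(a) ≠ 0 is finite. If the Picard group Pic(K, V) := Div(K, V)/P(K, V) (the free abelian group on V modulo the subgroup of principal divisors (a) = Σ_v v(a)·v) is finitely generated, then there exists a finite subset S ⊆ V such that Pic(K, V \ S) = 0. -/
import Mathlib


/-- A (normalized, surjective) discrete valuation on a field `K`, recorded by its
values on nonzero elements. -/
structure DVal (K : Type) [Field K] where
  toFun : K → ℤ
  map_one : toFun 1 = 0
  map_mul : ∀ x y : K, x ≠ 0 → y ≠ 0 → toFun (x * y) = toFun x + toFun y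
  surj : ∀ n : ℤ, ∃ x : K, x ≠ 0 ∧ toFun x = n
  min_le : ∀ x y : K, x ≠ 0 → y ≠ 0 → x + y ≠ 0 → min (toFun x) (toFun y) ≤ toFun (x + y)

variable {K : Type} [Field K]

/-- A divisor supported on a set `W` of discrete valuations: an integer-valued function
whose support inside `W` is finite (this encodes an element of the free abelian group on `W`,
recorded via its coefficients). -/
def IsDivisor (W : Set (DVal K)) (d : DVal K → ℤ) : Prop :=
  {v | v ∈ W ∧ d v ≠ 0}.Finite

/-- The divisor `d` is principal on `W`: on `W` it agrees with the divisor
`(a) = ∑ v(a)·v` of some `a ∈ K^×`. -/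
def IsPrincipalOn (W : Set (DVal K)) (d : DVal K → ℤ) : Prop :=
  ∃ a : K, a ≠ 0 ∧ ∀ v ∈ W, d v = v.toFun a

/-- `Pic(K, W) = Div(K, W)/P(K, W)` is finitely generated: there are finitely many divisors
`D 0, …, D (r-1)` such that every divisor on `W` is, on `W`, an integral combination of the
`D i` plus a principal divisor. -/
def PicFG (W : Set (DVal K)) : Prop :=
  ∃ (r : ℕ) (D : Fin r → (DVal K → ℤ)), (∀ i, IsDivisor W (D i)) ∧
    ∀ d : DVal K → ℤ, IsDivisor W d →
      ∃ (n : Fin r → ℤ) (a : K), a ≠ 0 ∧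
        ∀ v ∈ W, d v = (∑ i, n i * D i v) + v.toFun a

/-- The triviality of `Pic(K, W)`: every divisor on `W` is principal on `W`. -/
def PicTrivial (W : Set (DVal K)) : Prop :=
  ∀ d : DVal K → ℤ, IsDivisor W d → IsPrincipalOn W d

/-- if `V` satisfies condition (A) and `Pic(K, V)` is finitely generated, then
there is a finite subset `S ⊆ V` with `Pic(K, V \ S) = 0`. -/
theorem picTrivial_of_picFG (V : Set (DVal K))
    (hA : ∀ a : K, a ≠ 0 → {v | v ∈ V ∧ v.toFun a ≠ 0}.Finite)
    (hfg : PicFG V) :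
    ∃ S : Set (DVal K), S ⊆ V ∧ S.Finite ∧ PicTrivial (V \ S) := by
  obtain ⟨r, D, hD, hgen⟩ := hfg
  refine ⟨⋃ i : Fin r, {v | v ∈ V ∧ D i v ≠ 0}, ?_, ?_, ?_⟩
  · exact Set.iUnion_subset fun i v hv => hv.1
  · exact Set.finite_iUnion hD
  · intro d hd
    set S : Set (DVal K) := ⋃ i : Fin r, {v | v ∈ V ∧ D i v ≠ 0} with hS
    classical
    set d' : DVal K → ℤ := fun v => if v ∈ V \ S then d v else 0 with hd'
    have hdiv : IsDivisor V d' := by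
      apply hd.subset
      intro v hv
      have hmem : v ∈ V \ S := by
        by_contra h
        exact hv.2 (by simp only [hd']; exact if_neg h)
      exact ⟨hmem, fun h0 => hv.2 (by simp only [hd']; rw [if_pos hmem, h0])⟩
    obtain ⟨n, a, ha, h⟩ := hgen d' hdiv
    refine ⟨a, ha, fun v hv => ?_⟩
    have h1 := h v hv.1
    have hzero : ∀ i, D i v = 0 := by
      intro i
      by_contra hne
      exact hv.2 (Set.mem_iUnion.2 ⟨i, ⟨hv.1, hne⟩⟩)
    have : d' v = d v := by simp only [hd']; exact if_pos hv
    rw [this] at h1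
    simpa [hzero] using h1
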